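/- Let X be a pseudofinite discrete linear order (in a model M, every nonempty M-definable bounded subset of X has least and greatest elements), and let ℱ be the family of all elements x of the definable tree over X such that x is a definable one-to-one order-preserving function from an initial segment of X onto an initial segment of a definable pseudofinite linear order W*. Then ℱ is linearly ordered by the initial-segment relation: for any x, x' ∈ ℱ, either x ⊴ x' or x' ⊴ x. -/
import Mathlib


namespace Paper

/-- A node of the tree over the order `X` with length bound `d` and values in `W`:
a function from the initial segment `[0, lg)` of `X` to `W`, with `lg ≤ d`. -/
structure PFnW (X W : Type) [LinearOrder X] [LinearOrder W] (d : X) where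
  lg : X
  lg_le : lg ≤ d
  val : ∀ x : X, x < lg → W

/-- The (weak) initial-segment order on such nodes. -/
def PFnW.le {X W : Type} [LinearOrder X] [LinearOrder W] {d : X} (s t : PFnW X W d) : Prop :=
  ∃ h : s.lg ≤ t.lg, ∀ (x : X) (hx : x < s.lg), t.val x (lt_of_lt_of_le hx h) = s.val x hx

/-- Let `X` be a pseudofinite linear order and `W*` a pseudofinite
linear order. The family `ℱ` of tree elements which are one-to-one order-preserving
functions from an initial segment of `X` onto an initial segment of `W*` is linearly
ordered by the initial-segment relation. -/
theorem statement17 {X W : Type} [LinearOrder X] [LinearOrder W] (d : X)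
    (hpfX : ∀ S : Set X, S.Nonempty →
      (∃ m ∈ S, ∀ x ∈ S, m ≤ x) ∧ (∃ m ∈ S, ∀ x ∈ S, x ≤ m))
    (hpfW : ∀ S : Set W, S.Nonempty →
      (∃ m ∈ S, ∀ x ∈ S, m ≤ x) ∧ (∃ m ∈ S, ∀ x ∈ S, x ≤ m)) :
    ∀ s t : PFnW X W d,
      -- `s` is an order-isomorphism onto an initial segment of `W`
      ((∀ (x y : X) (hx : x < s.lg) (hy : y < s.lg), x < y → s.val x hx < s.val y hy) ∧
        (∀ w w' : W, (∃ x hx, s.val x hx = w) → w' ≤ w → ∃ x hx, s.val x hx = w')) →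
      -- and likewise `t`
      ((∀ (x y : X) (hx : x < t.lg) (hy : y < t.lg), x < y → t.val x hx < t.val y hy) ∧
        (∀ w w' : W, (∃ x hx, t.val x hx = w) → w' ≤ w → ∃ x hx, t.val x hx = w')) →
      s.le t ∨ t.le s := by
  -- Auxiliary characterization: for a strictly increasing map onto an initial
  -- segment, the values below `u.val m` are exactly the values at points below `m`.
  have key : ∀ (u : PFnW X W d),
      ((∀ (x y : X) (hx : x < u.lg) (hy : y < u.lg), x < y → u.val x hx < u.val y hy) ∧
        (∀ w w' : W, (∃ x hx, u.val x hx = w) → w' ≤ w → ∃ x hx, u.val x hx = w')) →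
      ∀ m (hm : m < u.lg) (w : W),
        w < u.val m hm ↔ ∃ x, ∃ hx : x < u.lg, x < m ∧ u.val x hx = w := by
    intro u ⟨h1, h2⟩ m hm w
    constructor
    · intro hw
      obtain ⟨x, hx, hxw⟩ := h2 (u.val m hm) w ⟨m, hm, rfl⟩ hw.le
      rcases lt_trichotomy x m with h' | h' | h'
      · exact ⟨x, hx, h', hxw⟩
      · exfalso; subst h'
        rw [← hxw] at hw
        exact lt_irrefl _ hw
      · exfalso
        have := h1 m x hm hx h'
        rw [hxw] at this
        exact lt_irrefl _ (hw.trans this)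
    · rintro ⟨x, hx, hxm, rfl⟩
      exact h1 x m hx hm hxm
  -- Main agreement lemma: if `s.lg ≤ t.lg` then `t` extends `s`.
  have agree : ∀ s t : PFnW X W d,
      ((∀ (x y : X) (hx : x < s.lg) (hy : y < s.lg), x < y → s.val x hx < s.val y hy) ∧
        (∀ w w' : W, (∃ x hx, s.val x hx = w) → w' ≤ w → ∃ x hx, s.val x hx = w')) →
      ((∀ (x y : X) (hx : x < t.lg) (hy : y < t.lg), x < y → t.val x hx < t.val y hy) ∧
        (∀ w w' : W, (∃ x hx, t.val x hx = w) → w' ≤ w → ∃ x hx, t.val x hx = w')) →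
      ∀ h : s.lg ≤ t.lg,
      ∀ (x : X) (hx : x < s.lg), t.val x (lt_of_lt_of_le hx h) = s.val x hx := by
    intro s t hs ht h x hx
    by_contra hne
    set S : Set X := {x | ∃ hx : x < s.lg, t.val x (lt_of_lt_of_le hx h) ≠ s.val x hx} with hSdef
    have hSne : S.Nonempty := ⟨x, hx, hne⟩
    obtain ⟨⟨m, hmS, hmin⟩, -⟩ := hpfX S hSne
    obtain ⟨hm, hmne⟩ := hmS
    have hm' : m < t.lg := lt_of_lt_of_le hm h
    -- all points below m agree
    have hagree : ∀ y (hy : y < s.lg), y < m →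
        t.val y (lt_of_lt_of_le hy h) = s.val y hy := by
      intro y hy hym
      by_contra hne'
      exact absurd (hmin y ⟨hy, hne'⟩) (not_le.2 hym)
    apply hmne
    rcases lt_trichotomy (t.val m hm') (s.val m hm) with hlt | heq | hgt
    · exfalso
      obtain ⟨y, hy, hym, hyw⟩ := (key s hs m hm _).mp hlt
      have h1 := hagree y hy hym
      rw [hyw] at h1
      exact absurd h1 (ne_of_lt (ht.1 y m (lt_of_lt_of_le hy h) hm' hym))
    · exact heq
    · exfalso
      obtain ⟨y, hy, hym, hyw⟩ := (key t ht m hm' _).mp hgt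
      have hys : y < s.lg := hym.trans hm
      have h1 := hagree y hys hym
      rw [hyw] at h1
      exact absurd h1.symm (ne_of_lt (hs.1 y m hys hm hym))
  intro s t hs ht
  rcases le_total s.lg t.lg with h | h
  · exact Or.inl ⟨h, agree s t hs ht h⟩
  · exact Or.inr ⟨h, agree t s ht hs h⟩

end Paper
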